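/- For any W ∈ ℝ^{m×r} and f satisfying the standard assumption with strong convexity parameter μ and gradient Lipschitz constant L, α(W) ≥ √(μ/L) · β(W). -/

import Mathlib

noncomputable section

open scoped BigOperators

abbrev E (m : ℕ) := EuclideanSpace ℝ (Fin m)

def toE {m : ℕ} (x : Fin m → ℝ) : E m := WithLp.toLp 2 x

/-- The unit simplex `Δ = {y | y ≥ 0, ∑ y ≤ 1}`. -/
def simplex (n : Type*) [Fintype n] : Set (n → ℝ) :=
  {y | (∀ i, 0 ≤ y i) ∧ ∑ i, y i ≤ 1}

/-- Assumption 2 of the paper: `f` is `μ`-strongly convex with `L`-Lipschitz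
gradient `f'`, and `0` is its global minimizer with `f 0 = 0`. -/
structure GoodF {m : ℕ} (f : E m → ℝ) (f' : E m → E m) (μ L : ℝ) : Prop where
  mu_pos : 0 < μ
  grad : ∀ x, HasGradientAt f (f' x) x
  lip : ∀ x y : E m, ‖f' x - f' y‖ ≤ L * ‖x - y‖
  sconv : ∀ x y : E m, ∀ δ : ℝ, 0 ≤ δ → δ ≤ 1 →
    f (δ • x + (1 - δ) • y) ≤ δ * f x + (1 - δ) * f y - μ / 2 * δ * (1 - δ) * ‖x - y‖ ^ 2
  f_zero : f 0 = 0
  min_zero : ∀ x, f 0 ≤ f x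

/-- A minimizer over the unit simplex of `y ↦ f (x - B y)` (chosen via choice). -/
def argminSimplex {m : ℕ} {n : Type*} [Fintype n] (f : E m → ℝ)
    (B : Matrix (Fin m) n ℝ) (x : E m) : n → ℝ :=
  Classical.epsilon fun y => y ∈ simplex n ∧
    ∀ z ∈ simplex n, f (x - toE (B.mulVec y)) ≤ f (x - toE (B.mulVec z))

/-- The residual `R_B^f(x) = x - B y*` where `y* = argmin_{y ∈ Δ} f (x - B y)`. -/
def resid {m : ℕ} {n : Type*} [Fintype n] (f : E m → ℝ)
    (B : Matrix (Fin m) n ℝ) (x : E m) : E m :=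
  x - toE (B.mulVec (argminSimplex f B x))

/-- Column-wise residual matrix `R_B^f(A)`. -/
def residMat {m : ℕ} {n k : Type*} [Fintype n] (f : E m → ℝ)
    (B : Matrix (Fin m) n ℝ) (A : Matrix (Fin m) k ℝ) : Matrix (Fin m) k ℝ :=
  fun i j => resid f B (toE fun i' => A i' j) i

/-- `‖N‖_{1,2}`: the maximum `ℓ₂` column norm. -/
def norm12 {m : ℕ} {n : Type*} [Fintype n] (N : Matrix (Fin m) n ℝ) : ℝ :=
  sSup {c | ∃ j, c = ‖toE fun i => N i j‖}

/-- `α(W)`: minimum distance between a column of `W` and the convex hull of the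
other columns of `W` and the origin. -/
def alpha {m r : ℕ} (W : Matrix (Fin m) (Fin r) ℝ) : ℝ :=
  sInf {c | ∃ (j : Fin r) (x : Fin r → ℝ), x ∈ simplex (Fin r) ∧ x j = 0 ∧
    c = ‖toE (fun i => W i j) - toE (W.mulVec x)‖}

/-- `σ(W)`: smallest singular value (`min_{‖z‖₂ ≥ 1} ‖Wz‖₂`) if `m ≥ r`, and `0` if `m < r`. -/
def smin {m r : ℕ} (W : Matrix (Fin m) (Fin r) ℝ) : ℝ :=
  if r ≤ m then sInf {c | ∃ z : Fin r → ℝ, 1 ≤ ‖toE z‖ ∧ c = ‖toE (W.mulVec z)‖} else 0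

/-- `[B, x]`: append the column `x` to `B`. -/
def appendCol {m s : ℕ} (B : Matrix (Fin m) (Fin s) ℝ) (x : E m) :
    Matrix (Fin m) (Fin (s + 1)) ℝ :=
  fun i => Fin.snoc (fun j => B i j) (x i)

/-- `[A, B]`: horizontal concatenation. -/
def appendMat {m k s : ℕ} (A : Matrix (Fin m) (Fin k) ℝ) (B : Matrix (Fin m) (Fin s) ℝ) :
    Matrix (Fin m) (Fin (k + s)) ℝ :=
  fun i => Fin.append (fun j => A i j) (fun j => B i j)

/-- `ω(P) = min (min_i ‖p_i‖₂, (1/√2) min_{i ≠ j} ‖p_i - p_j‖₂)`. -/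
def omegaM {m : ℕ} {k : Type*} [Fintype k] (P : Matrix (Fin m) k ℝ) : ℝ :=
  sInf ({c | ∃ i, c = ‖toE fun a => P a i‖} ∪
    {c | ∃ i j, i ≠ j ∧ c = (Real.sqrt 2)⁻¹ * ‖(toE fun a => P a i) - toE fun a => P a j‖})

/-- `β(W) = min (ν_β(W), γ_β(W)/√2)` as in the paper. -/
def beta {m r : ℕ} (f : E m → ℝ) (W : Matrix (Fin m) (Fin r) ℝ) : ℝ :=
  sInf ({c | ∃ j : Fin r,
      c = ‖resid f (W.submatrix id fun p : {i // i ≠ j} => (p : Fin r)) (toE fun a => W a j)‖} ∪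
    {c | ∃ (i j : Fin r) (J : Finset (Fin r)), i ≠ j ∧ i ∉ J ∧ j ∉ J ∧
      c = (Real.sqrt 2)⁻¹ *
        ‖resid f (W.submatrix id fun p : J => (p : Fin r)) (toE fun a => W a i) -
         resid f (W.submatrix id fun p : J => (p : Fin r)) (toE fun a => W a j)‖})

theorem Matrix.isHermitian_transpose_mul_self {m n α : Type*} [Fintype m] [CommSemiring α]
    [StarRing α] [TrivialStar α] (A : Matrix m n α) : (Matrix.transpose A * A).IsHermitian := by
  simpa [Matrix.conjTranspose_eq_transpose_of_trivial] using Matrix.isHermitian_conjTranspose_mul_self A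

/-- Singular values of `B` in nonincreasing order (`i`-th largest at index `i`). -/
def singVals {m s : ℕ} (B : Matrix (Fin m) (Fin s) ℝ) : Fin s → ℝ := fun i =>
  Real.sqrt (((Matrix.isHermitian_transpose_mul_self B).eigenvalues ∘
    Tuple.sort (Matrix.isHermitian_transpose_mul_self B).eigenvalues) i.rev)

/-- The spectral norm `‖N‖₂` (ℓ₂ operator norm). -/
def spec {m s : ℕ} (N : Matrix (Fin m) (Fin s) ℝ) : ℝ :=
  ‖LinearMap.toContinuousLinearMap (Matrix.toEuclideanLin N)‖

section helpers

open scoped RealInnerProductSpace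

variable {m : ℕ} {μ L : ℝ} {f : E m → ℝ} {f' : E m → E m}

lemma GoodF.f_nonneg (hf : GoodF f f' μ L) (x : E m) : 0 ≤ f x :=
  hf.f_zero ▸ hf.min_zero x

lemma GoodF.cont (hf : GoodF f f' μ L) : Continuous f :=
  continuous_iff_continuousAt.mpr fun x =>
    (hasGradientAt_iff_hasFDerivAt.mp (hf.grad x)).differentiableAt.continuousAt

lemma GoodF.lower (hf : GoodF f f' μ L) (x : E m) : μ / 2 * ‖x‖ ^ 2 ≤ f x := by
  have key : ∀ δ : ℝ, 0 < δ → δ ≤ 1 → μ / 2 * (1 - δ) * ‖x‖ ^ 2 ≤ f x := by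
    intro δ hδ hδ1
    have h := hf.sconv x 0 δ hδ.le hδ1
    simp only [smul_zero, add_zero, hf.f_zero, mul_zero, sub_zero] at h
    have h0 : 0 ≤ f (δ • x) := hf.f_nonneg _
    have h1 : μ / 2 * (1 - δ) * ‖x‖ ^ 2 * δ ≤ f x * δ := by nlinarith
    exact le_of_mul_le_mul_right h1 hδ
  have htend : Filter.Tendsto (fun δ : ℝ => μ / 2 * (1 - δ) * ‖x‖ ^ 2)
      (nhdsWithin 0 (Set.Ioi 0)) (nhds (μ / 2 * ‖x‖ ^ 2)) := by
    have hc : ContinuousAt (fun δ : ℝ => μ / 2 * (1 - δ) * ‖x‖ ^ 2) 0 := by fun_prop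
    have := hc.continuousWithinAt (s := Set.Ioi (0:ℝ))
    simpa [ContinuousWithinAt] using this
  refine le_of_tendsto htend ?_
  filter_upwards [Ioo_mem_nhdsGT_of_mem (Set.mem_Ico.mpr ⟨le_refl (0:ℝ), one_pos⟩)] with δ hδ
  exact key δ hδ.1 hδ.2.le

lemma GoodF.grad_zero (hf : GoodF f f' μ L) : f' 0 = 0 := by
  have hmin : IsLocalMin f 0 := Filter.Eventually.of_forall hf.min_zero
  have h := hmin.hasFDerivAt_eq_zero (hasGradientAt_iff_hasFDerivAt.mp (hf.grad 0))
  have := congrArg (InnerProductSpace.toDual ℝ (E m)).symm h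
  simpa using this

lemma GoodF.upper (hf : GoodF f f' μ L) (y : E m) : f y ≤ L / 2 * ‖y‖ ^ 2 := by
  set h : ℝ → ℝ := fun t => f (t • y) - L / 2 * t ^ 2 * ‖y‖ ^ 2 with hh
  have hd : ∀ t : ℝ, HasDerivAt h (⟪f' (t • y), y⟫ - L / 2 * (2 * t) * ‖y‖ ^ 2) t := by
    intro t
    have hc : HasDerivAt (fun s : ℝ => s • y) y t := by
      simpa using (hasDerivAt_id t).smul_const y
    have h1 : HasDerivAt (fun s : ℝ => f (s • y)) (⟪f' (t • y), y⟫) t := by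
      have := (hasGradientAt_iff_hasFDerivAt.mp (hf.grad (t • y))).comp_hasDerivAt t hc
      simp only [InnerProductSpace.toDual_apply_apply] at this
      exact this
    have h2 : HasDerivAt (fun s : ℝ => L / 2 * s ^ 2 * ‖y‖ ^ 2) (L / 2 * (2 * t) * ‖y‖ ^ 2) t := by
      have := ((hasDerivAt_pow 2 t).const_mul (L / 2)).mul_const (‖y‖ ^ 2)
      refine this.congr_deriv ?_
      ring
    exact h1.sub h2
  have hdiff : Differentiable ℝ h := fun t => (hd t).differentiableAt
  have hanti : AntitoneOn h (Set.Icc 0 1) := by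
    apply antitoneOn_of_deriv_nonpos (convex_Icc 0 1) hdiff.continuous.continuousOn
      hdiff.differentiableOn
    intro t ht
    rw [interior_Icc] at ht
    rw [(hd t).deriv]
    have ht0 : (0:ℝ) < t := ht.1
    have hb : ⟪f' (t • y), y⟫ ≤ L * t * ‖y‖ ^ 2 := by
      calc ⟪f' (t • y), y⟫ = ⟪f' (t • y) - f' 0, y⟫ := by rw [hf.grad_zero]; simp
        _ ≤ ‖f' (t • y) - f' 0‖ * ‖y‖ := real_inner_le_norm _ _
        _ ≤ (L * ‖t • y - (0 : E m)‖) * ‖y‖ :=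
            mul_le_mul_of_nonneg_right (hf.lip _ _) (norm_nonneg y)
        _ = L * t * ‖y‖ ^ 2 := by
            rw [sub_zero, norm_smul]
            simp [Real.norm_eq_abs, abs_of_pos ht0]
            ring
    linarith
  have h10 := hanti (Set.left_mem_Icc.mpr zero_le_one) (Set.right_mem_Icc.mpr zero_le_one)
    zero_le_one
  simp only [hh, one_smul, zero_smul, hf.f_zero, one_pow] at h10
  nlinarith [h10]

lemma simplex_compact (n : Type*) [Fintype n] : IsCompact (simplex n) := by
  have hsub : simplex n ⊆ Set.pi Set.univ (fun _ : n => Set.Icc (0:ℝ) 1) := by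
    rintro y ⟨h1, h2⟩ i _
    exact ⟨h1 i, le_trans (Finset.single_le_sum (fun k _ => h1 k) (Finset.mem_univ i)) h2⟩
  have hclosed : IsClosed (simplex n) := by
    have hs : simplex n = (⋂ i, {y : n → ℝ | 0 ≤ y i}) ∩ {y | ∑ i, y i ≤ 1} := by
      ext y; simp [simplex, Set.mem_iInter]
    rw [hs]
    exact IsClosed.inter
      (isClosed_iInter fun i => isClosed_le continuous_const (continuous_apply i))
      (isClosed_le (continuous_finset_sum _ fun i _ => continuous_apply i) continuous_const)
  exact (isCompact_univ_pi fun _ => isCompact_Icc).of_isClosed_subset hclosed hsub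

lemma zero_mem_simplex (n : Type*) [Fintype n] : (0 : n → ℝ) ∈ simplex n :=
  ⟨fun _ => le_refl 0, by simp⟩

lemma argminSimplex_spec {n : Type*} [Fintype n] (hf : GoodF f f' μ L)
    (B : Matrix (Fin m) n ℝ) (x : E m) :
    argminSimplex f B x ∈ simplex n ∧
      ∀ z ∈ simplex n, f (x - toE (B.mulVec (argminSimplex f B x))) ≤
        f (x - toE (B.mulVec z)) := by
  have hcont : ContinuousOn (fun y : n → ℝ => f (x - toE (B.mulVec y))) (simplex n) := by
    have htoE : Continuous (toE (m := m)) := PiLp.continuous_toLp 2 (fun _ : Fin m => ℝ)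
    have hmv : Continuous fun y : n → ℝ => B.mulVec y := by
      apply continuous_pi
      intro i
      simp only [Matrix.mulVec, dotProduct]
      exact continuous_finset_sum _ fun k _ => continuous_const.mul (continuous_apply k)
    exact (hf.cont.comp (continuous_const.sub (htoE.comp hmv))).continuousOn
  obtain ⟨y, hy, hmin⟩ := (simplex_compact n).exists_isMinOn ⟨0, zero_mem_simplex n⟩ hcont
  exact Classical.epsilon_spec (p := fun y => y ∈ simplex n ∧
    ∀ z ∈ simplex n, f (x - toE (B.mulVec y)) ≤ f (x - toE (B.mulVec z)))
    ⟨y, hy, fun z hz => hmin hz⟩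

end helpers

theorem stmt15 (m r : ℕ) (μ L : ℝ) (f : E m → ℝ) (f' : E m → E m) (hf : GoodF f f' μ L)
    (W : Matrix (Fin m) (Fin r) ℝ) :
    Real.sqrt (μ / L) * beta f W ≤ alpha W := by
  have hα0 : 0 ≤ alpha W := Real.sInf_nonneg (by
    rintro c ⟨j, x, hx, hxj, rfl⟩; exact norm_nonneg _)
  have hβbdd : BddBelow ({c | ∃ j : Fin r,
      c = ‖resid f (W.submatrix id fun p : {i // i ≠ j} => (p : Fin r)) (toE fun a => W a j)‖} ∪
    {c | ∃ (i j : Fin r) (J : Finset (Fin r)), i ≠ j ∧ i ∉ J ∧ j ∉ J ∧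
      c = (Real.sqrt 2)⁻¹ *
        ‖resid f (W.submatrix id fun p : J => (p : Fin r)) (toE fun a => W a i) -
         resid f (W.submatrix id fun p : J => (p : Fin r)) (toE fun a => W a j)‖}) := by
    refine ⟨0, ?_⟩
    rintro c (⟨j, rfl⟩ | ⟨i, j, J, _, _, _, rfl⟩) <;> positivity
  have hβ0 : 0 ≤ beta f W := Real.sInf_nonneg (by
    rintro c (⟨j, rfl⟩ | ⟨i, j, J, _, _, _, rfl⟩) <;> positivity)
  by_cases hL : 0 < L
  swap
  · have hs : Real.sqrt (μ / L) = 0 :=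
      Real.sqrt_eq_zero'.mpr (div_nonpos_of_nonneg_of_nonpos hf.mu_pos.le (not_lt.mp hL))
    rw [hs, zero_mul]; exact hα0
  rcases Nat.eq_zero_or_pos r with hr | hr
  · subst hr
    have hβ : beta f W = 0 := by
      have : ({c | ∃ j : Fin 0,
          c = ‖resid f (W.submatrix id fun p : {i // i ≠ j} => (p : Fin 0)) (toE fun a => W a j)‖} ∪
        {c | ∃ (i j : Fin 0) (J : Finset (Fin 0)), i ≠ j ∧ i ∉ J ∧ j ∉ J ∧
          c = (Real.sqrt 2)⁻¹ *
            ‖resid f (W.submatrix id fun p : J => (p : Fin 0)) (toE fun a => W a i) -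
             resid f (W.submatrix id fun p : J => (p : Fin 0)) (toE fun a => W a j)‖}) = ∅ := by
        rw [Set.eq_empty_iff_forall_notMem]
        rintro c (⟨j, _⟩ | ⟨i, _, _, _, _, _, _⟩)
        · exact j.elim0
        · exact i.elim0
      rw [beta, this, Real.sInf_empty]
    rw [hβ, mul_zero]; exact hα0
  -- main case
  refine le_csInf ?_ ?_
  · refine ⟨‖toE (fun i => W i ⟨0, hr⟩) - toE (W.mulVec 0)‖, ⟨0, hr⟩, 0,
      zero_mem_simplex _, rfl, rfl⟩
  rintro c ⟨j, x, hx, hxj, rfl⟩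
  set B := W.submatrix id fun p : {i // i ≠ j} => (p : Fin r) with hB
  set wj : E m := toE fun a => W a j with hwj
  set R : E m := resid f B wj with hR
  obtain ⟨hy, hmin⟩ := argminSimplex_spec hf B wj
  -- restriction of x to the subtype lies in the simplex
  have hxJ : (fun p : {i // i ≠ j} => x (p : Fin r)) ∈ simplex {i // i ≠ j} := by
    constructor
    · exact fun p => hx.1 _
    · have h1 : ∑ p : {i // i ≠ j}, x (p : Fin r) = ∑ k ∈ Finset.univ.erase j, x k :=
        (Finset.sum_subtype (Finset.univ.erase j) (by simp) x).symm
      rw [h1]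
      refine le_trans (Finset.sum_le_sum_of_subset_of_nonneg (Finset.subset_univ _)
        (fun k _ _ => hx.1 k)) hx.2
  have heq : B.mulVec (fun p : {i // i ≠ j} => x (p : Fin r)) = W.mulVec x := by
    funext i
    simp only [Matrix.mulVec, dotProduct, hB, Matrix.submatrix_apply, id_eq]
    have h1 : ∑ p : {i' // i' ≠ j}, W i (p : Fin r) * x (p : Fin r)
        = ∑ k ∈ Finset.univ.erase j, W i k * x k :=
      (Finset.sum_subtype (Finset.univ.erase j) (by simp) (fun k => W i k * x k)).symm
    rw [h1, Finset.sum_erase]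
    rw [hxj, mul_zero]
  have h1 : f R ≤ f (wj - toE (W.mulVec x)) := by
    have := hmin _ hxJ
    rw [heq] at this
    exact this
  have h2 : μ / 2 * ‖R‖ ^ 2 ≤ f R := hf.lower R
  have h3 : f (wj - toE (W.mulVec x)) ≤ L / 2 * ‖wj - toE (W.mulVec x)‖ ^ 2 := hf.upper _
  have hβR : beta f W ≤ ‖R‖ := csInf_le hβbdd (Or.inl ⟨j, rfl⟩)
  set a := ‖wj - toE (W.mulVec x)‖ with ha
  have hkey : μ / L * ‖R‖ ^ 2 ≤ a ^ 2 := by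
    rw [div_mul_eq_mul_div, div_le_iff₀ hL]
    nlinarith
  calc Real.sqrt (μ / L) * beta f W
      ≤ Real.sqrt (μ / L) * ‖R‖ := mul_le_mul_of_nonneg_left hβR (Real.sqrt_nonneg _)
    _ = Real.sqrt (μ / L * ‖R‖ ^ 2) := by
        rw [Real.sqrt_mul (div_nonneg hf.mu_pos.le hL.le) (‖R‖^2), Real.sqrt_sq (norm_nonneg _)]
    _ ≤ Real.sqrt (a ^ 2) := Real.sqrt_le_sqrt hkey
    _ = a := Real.sqrt_sq (norm_nonneg _)
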